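/- (Covariance-matched split Gibbs is exact.) Let n, m ≥ 1, let H be a real m×n matrix, let ρ > 0, and let Σ_η be a positive definite symmetric real m×m matrix such that Σ_split := Σ_η − ρ² H Hᵀ is positive definite. Then for all x ∈ ℝⁿ and y ∈ ℝᵐ, ∫_{ℝⁿ} g_m(y; H z, Σ_split) · g_n(z; x, ρ² I_n) dz = g_m(y; H x, Σ_η). Consequently, for any prior density p : ℝⁿ → [0, ∞), the function x ↦ p(x) · ∫_{ℝⁿ} g_m(y; H z, Σ_split) · g_n(z; x, ρ² I_n) dz equals p(x) · g_m(y; H x, Σ_η), the exact posterior kernel, for every admissible ρ, without requiring ρ → 0. -/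

import Mathlib

open MeasureTheory Matrix

/-- The Gaussian density on `ℝᵈ` with mean `m` and covariance matrix `S`:
`g_d(x; m, S) = ((2π)^d det S)^(−1/2) · exp(−(1/2)⟨x − m, S⁻¹(x − m)⟩)`. -/
noncomputable def gaussDensity (d : ℕ) (m : Fin d → ℝ) (S : Matrix (Fin d) (Fin d) ℝ)
    (x : Fin d → ℝ) : ℝ :=
  ((2 * Real.pi) ^ d * S.det) ^ (-(1 : ℝ) / 2) *
    Real.exp (-(1 / 2) * ((x - m) ⬝ᵥ S⁻¹.mulVec (x - m)))

section Aux

variable {n : ℕ}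

/-- `(C *ᵥ z) ⬝ᵥ w = z ⬝ᵥ (Cᵀ *ᵥ w)`. -/
lemma mulVec_dotProduct'' {k l : ℕ} (C : Matrix (Fin k) (Fin l) ℝ) (z : Fin l → ℝ)
    (w : Fin k → ℝ) : C.mulVec z ⬝ᵥ w = z ⬝ᵥ Cᵀ.mulVec w := by
  rw [Matrix.dotProduct_mulVec, Matrix.vecMul_transpose]

/-- symmetric matrices give symmetric forms -/
lemma dot_symm (N : Matrix (Fin n) (Fin n) ℝ) (hN : Nᵀ = N) (u v : Fin n → ℝ) :
    u ⬝ᵥ N.mulVec v = v ⬝ᵥ N.mulVec u := by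
  rw [dotProduct_comm, mulVec_dotProduct'', hN]

lemma quad_sub_expand (N : Matrix (Fin n) (Fin n) ℝ) (hN : Nᵀ = N) (u v : Fin n → ℝ) :
    (u - v) ⬝ᵥ N.mulVec (u - v)
      = u ⬝ᵥ N.mulVec u - 2 * (v ⬝ᵥ N.mulVec u) + v ⬝ᵥ N.mulVec v := by
  rw [Matrix.mulVec_sub, dotProduct_sub, sub_dotProduct, sub_dotProduct,
    dot_symm N hN u v]
  ring

lemma inv_smul_one' {c : ℝ} (hc : c ≠ 0) :
    (c • (1 : Matrix (Fin n) (Fin n) ℝ))⁻¹ = c⁻¹ • 1 := by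
  apply Matrix.inv_eq_right_inv
  rw [Matrix.smul_mul, Matrix.mul_smul, Matrix.one_mul, smul_smul, mul_inv_cancel₀ hc, one_smul]

lemma det_smul_one {c : ℝ} : (c • (1 : Matrix (Fin n) (Fin n) ℝ)).det = c ^ n := by
  simp [Matrix.det_smul]

lemma complete_square (M : Matrix (Fin n) (Fin n) ℝ) (hMs : Mᵀ = M) (hMdet : IsUnit M.det)
    (b z : Fin n → ℝ) :
    z ⬝ᵥ M.mulVec z - 2 * (b ⬝ᵥ z)
      = (z - M⁻¹.mulVec b) ⬝ᵥ M.mulVec (z - M⁻¹.mulVec b) - b ⬝ᵥ M⁻¹.mulVec b := by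
  rw [quad_sub_expand M hMs]
  have h1 : M⁻¹.mulVec b ⬝ᵥ M.mulVec z = b ⬝ᵥ z := by
    rw [mulVec_dotProduct'', Matrix.transpose_nonsing_inv, hMs, Matrix.mulVec_mulVec,
      Matrix.nonsing_inv_mul M hMdet, Matrix.one_mulVec]
  have h2 : M⁻¹.mulVec b ⬝ᵥ M.mulVec (M⁻¹.mulVec b) = b ⬝ᵥ M⁻¹.mulVec b := by
    rw [Matrix.mulVec_mulVec, Matrix.mul_nonsing_inv M hMdet, Matrix.one_mulVec,
      dotProduct_comm]
  rw [h1, h2]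
  ring

lemma sqrt_pow'' {x : ℝ} (hx : 0 ≤ x) (k : ℕ) :
    Real.sqrt x ^ k = Real.sqrt (x ^ k) := by
  rw [Real.sqrt_eq_rpow, Real.sqrt_eq_rpow, ← Real.rpow_natCast (x ^ ((1:ℝ)/2)) k,
    ← Real.rpow_mul hx, ← Real.rpow_natCast x k, ← Real.rpow_mul hx, mul_comm]

lemma rpow_neg_half_eq {x : ℝ} (hx : 0 < x) :
    x ^ (-(1:ℝ) / 2) = (Real.sqrt x)⁻¹ := by
  rw [Real.sqrt_eq_rpow, ← Real.rpow_neg hx.le]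
  norm_num

lemma continuous_quadExp (M : Matrix (Fin n) (Fin n) ℝ) :
    Continuous fun z : Fin n → ℝ => Real.exp (-(1/2) * (z ⬝ᵥ M.mulVec z)) := by
  apply Real.continuous_exp.comp
  apply Continuous.mul continuous_const
  have : Continuous fun z : Fin n → ℝ => ∑ i, z i * (∑ j, M i j * z j) := by
    apply continuous_finset_sum
    intro i _
    exact (continuous_apply i).mul
      (continuous_finset_sum _ fun j _ => continuous_const.mul (continuous_apply j))
  exact this

lemma integral_comp_mulVec (A : Matrix (Fin n) (Fin n) ℝ) (hA : A.det ≠ 0)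
    (f : (Fin n → ℝ) → ℝ) (hf : Continuous f) :
    ∫ z : Fin n → ℝ, f (A.mulVec z) = |A.det|⁻¹ * ∫ z : Fin n → ℝ, f z := by
  have hT : LinearMap.det (Matrix.toLin' A) ≠ 0 := by
    rwa [LinearMap.det_toLin']
  have hmap := Real.map_linearMap_volume_pi_eq_smul_volume_pi hT
  have hcont : Continuous (Matrix.toLin' A) := LinearMap.continuous_on_pi _
  have h1 : ∫ z : Fin n → ℝ, f (A.mulVec z)
      = ∫ w, f w ∂(Measure.map (Matrix.toLin' A) volume) := by
    rw [integral_map hcont.measurable.aemeasurable hf.aestronglyMeasurable]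
    simp [Matrix.toLin'_apply]
  rw [h1, hmap, integral_smul_measure, LinearMap.det_toLin',
    ENNReal.toReal_ofReal (abs_nonneg _), abs_inv, smul_eq_mul]

lemma integral_exp_neg_half_self :
    ∫ z : Fin n → ℝ, Real.exp (-(1/2) * (z ⬝ᵥ z)) = Real.sqrt ((2 * Real.pi) ^ n) := by
  have h1 : ∀ z : Fin n → ℝ, Real.exp (-(1/2) * (z ⬝ᵥ z))
      = ∏ i, Real.exp (-(1/2) * (z i ^ 2)) := by
    intro z
    rw [← Real.exp_sum]
    congr 1
    simp only [dotProduct]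
    rw [Finset.mul_sum]
    congr 1 with i
    ring
  calc ∫ z : Fin n → ℝ, Real.exp (-(1/2) * (z ⬝ᵥ z))
      = ∫ z : Fin n → ℝ, ∏ i, Real.exp (-(1/2) * (z i ^ 2)) := by
        congr 1 with z; exact h1 z
    _ = ∏ _i : Fin n, ∫ v : ℝ, Real.exp (-(1/2) * v ^ 2) := by
        rw [MeasureTheory.integral_fintype_prod_volume_eq_prod
          (f := fun (_ : Fin n) (v : ℝ) => Real.exp (-(1/2) * v ^ 2))]
    _ = Real.sqrt ((2 * Real.pi) ^ n) := by
        have : ∫ v : ℝ, Real.exp (-(1/2) * v ^ 2) = Real.sqrt (2 * Real.pi) := by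
          have := integral_gaussian (1/2)
          simp only [neg_mul] at this ⊢
          rw [this]
          congr 1
          rw [div_div_eq_mul_div, div_one]
          ring
        rw [this, Finset.prod_const, Finset.card_univ, Fintype.card_fin,
          sqrt_pow'' (by positivity)]

open scoped MatrixOrder in
lemma integral_gauss_quad (M : Matrix (Fin n) (Fin n) ℝ) (hM : M.PosDef) (c : Fin n → ℝ) :
    ∫ z : Fin n → ℝ, Real.exp (-(1/2) * ((z - c) ⬝ᵥ M.mulVec (z - c)))
      = Real.sqrt ((2 * Real.pi) ^ n) * (Real.sqrt M.det)⁻¹ := by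
  have htrans : ∫ z : Fin n → ℝ, Real.exp (-(1/2) * ((z - c) ⬝ᵥ M.mulVec (z - c)))
      = ∫ z : Fin n → ℝ, Real.exp (-(1/2) * (z ⬝ᵥ M.mulVec z)) := by
    simp only [sub_eq_add_neg]
    exact integral_add_right_eq_self
      (fun z => Real.exp (-(1/2) * (z ⬝ᵥ M.mulVec z))) (-c)
  rw [htrans]
  set B := CFC.sqrt M with hBdef
  have hBB : B * B = M := CFC.sqrt_mul_sqrt_self M hM.posSemidef.nonneg
  have hBsymm : Bᵀ = B := by
    have := (CFC.sqrt_nonneg M).posSemidef.isHermitian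
    rwa [Matrix.IsHermitian, Matrix.conjTranspose_eq_transpose_of_trivial] at this
  have hdetMpos : 0 < M.det := hM.det_pos
  have hdetB2 : B.det * B.det = M.det := by rw [← Matrix.det_mul, hBB]
  have hdetB : B.det ≠ 0 := by
    intro h; rw [h, mul_zero] at hdetB2; exact hdetMpos.ne hdetB2
  have hdetBinv : (B⁻¹).det ≠ 0 := by
    rw [Matrix.det_nonsing_inv, Ring.inverse_eq_inv]
    exact inv_ne_zero hdetB
  have hcv := integral_comp_mulVec B⁻¹ hdetBinv _ (continuous_quadExp M)
  have hpoint : ∀ z : Fin n → ℝ,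
      Real.exp (-(1/2) * (B⁻¹.mulVec z ⬝ᵥ M.mulVec (B⁻¹.mulVec z)))
        = Real.exp (-(1/2) * (z ⬝ᵥ z)) := by
    intro z
    congr 2
    rw [Matrix.mulVec_mulVec, ← hBB,
      Matrix.mul_nonsing_inv_cancel_right B B (isUnit_iff_ne_zero.mpr hdetB),
      mulVec_dotProduct'', Matrix.transpose_nonsing_inv, hBsymm, Matrix.mulVec_mulVec,
      Matrix.nonsing_inv_mul B (isUnit_iff_ne_zero.mpr hdetB), Matrix.one_mulVec]
  have hL : ∫ z : Fin n → ℝ, Real.exp (-(1/2) * (B⁻¹.mulVec z ⬝ᵥ M.mulVec (B⁻¹.mulVec z)))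
      = Real.sqrt ((2 * Real.pi) ^ n) := by
    rw [show (fun z : Fin n → ℝ => Real.exp (-(1/2) * (B⁻¹.mulVec z ⬝ᵥ M.mulVec (B⁻¹.mulVec z))))
        = fun z : Fin n → ℝ => Real.exp (-(1/2) * (z ⬝ᵥ z)) from funext hpoint]
    exact integral_exp_neg_half_self
  rw [hL] at hcv
  have habs : |B⁻¹.det| = (Real.sqrt M.det)⁻¹ := by
    rw [Matrix.det_nonsing_inv, Ring.inverse_eq_inv, abs_inv]
    congr 1
    rw [← Real.sqrt_sq_eq_abs, sq, hdetB2]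
  have h2 : ∫ z : Fin n → ℝ, Real.exp (-(1/2) * (z ⬝ᵥ M.mulVec z))
      = |B⁻¹.det| * Real.sqrt ((2 * Real.pi) ^ n) := by
    have habsne : |B⁻¹.det| ≠ 0 := abs_ne_zero.mpr hdetBinv
    rw [hcv, ← mul_assoc, mul_inv_cancel₀ habsne, one_mul]
  rw [h2, habs]
  ring

lemma posDef_smul_one {c : ℝ} (hc : 0 < c) :
    (c • (1 : Matrix (Fin n) (Fin n) ℝ)).PosDef := by
  refine Matrix.PosDef.of_dotProduct_mulVec_pos ?_ (fun x hx => ?_)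
  · unfold Matrix.IsHermitian
    ext i j
    simp [Matrix.conjTranspose_apply, Matrix.one_apply]
    split <;> simp_all [eq_comm]
  · have h1 : (c • (1 : Matrix (Fin n) (Fin n) ℝ)).mulVec x = c • x := by
      rw [Matrix.smul_mulVec, Matrix.one_mulVec]
    rw [h1]
    have hsx : star x = x := by simp
    have hpos : 0 < x ⬝ᵥ x := by
      have hne : ∃ i, x i ≠ 0 := by
        by_contra h
        push_neg at h
        exact hx (funext h)
      obtain ⟨i, hi⟩ := hne
      have : (0:ℝ) < ∑ j, x j * x j := by
        apply Finset.sum_pos' (fun j _ => mul_self_nonneg _)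
        exact ⟨i, Finset.mem_univ i, mul_self_pos.mpr hi⟩
      simpa [dotProduct] using this
    have : x ⬝ᵥ c • x = c * (x ⬝ᵥ x) := by
      rw [dotProduct_smul]; simp [smul_eq_mul]
    rw [hsx, this]
    positivity


end Aux


/-- Covariance-matched split Gibbs is exact: with `Σ_split = Σ_η − ρ² H Hᵀ` positive
definite, `∫ g_m(y; H z, Σ_split) g_n(z; x, ρ² Iₙ) dz = g_m(y; H x, Σ_η)` for all `x, y`;
consequently for any nonnegative prior density `p`, the split Gibbs kernel
`p(x) · ∫ g_m(y; H z, Σ_split) g_n(z; x, ρ² Iₙ) dz` equals the exact posterior kernel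
`p(x) · g_m(y; H x, Σ_η)`. -/
theorem matched_split_gibbs_exact (n m : ℕ) (hn : 1 ≤ n) (hm : 1 ≤ m)
    (H : Matrix (Fin m) (Fin n) ℝ) (ρ : ℝ) (hρ : 0 < ρ)
    (Sη : Matrix (Fin m) (Fin m) ℝ) (hSη : Sη.PosDef)
    (hSplit : (Sη - ρ ^ 2 • (H * Hᵀ)).PosDef) :
    (∀ (x : Fin n → ℝ) (y : Fin m → ℝ),
        ∫ z : Fin n → ℝ,
            gaussDensity m (H.mulVec z) (Sη - ρ ^ 2 • (H * Hᵀ)) y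
              * gaussDensity n x (ρ ^ 2 • (1 : Matrix (Fin n) (Fin n) ℝ)) z
          = gaussDensity m (H.mulVec x) Sη y)
    ∧ ∀ (p : (Fin n → ℝ) → ℝ), (∀ x, 0 ≤ p x) →
        ∀ (x : Fin n → ℝ) (y : Fin m → ℝ),
          p x * ∫ z : Fin n → ℝ,
              gaussDensity m (H.mulVec z) (Sη - ρ ^ 2 • (H * Hᵀ)) y
                * gaussDensity n x (ρ ^ 2 • (1 : Matrix (Fin n) (Fin n) ℝ)) z
            = p x * gaussDensity m (H.mulVec x) Sη y := by
  have main : ∀ (x : Fin n → ℝ) (y : Fin m → ℝ),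
      ∫ z : Fin n → ℝ,
          gaussDensity m (H.mulVec z) (Sη - ρ ^ 2 • (H * Hᵀ)) y
            * gaussDensity n x (ρ ^ 2 • (1 : Matrix (Fin n) (Fin n) ℝ)) z
        = gaussDensity m (H.mulVec x) Sη y := by
    intro x y
    set t : ℝ := ρ ^ 2 with htdef
    have ht : 0 < t := by positivity
    set S : Matrix (Fin m) (Fin m) ℝ := Sη - t • (H * Hᵀ) with hSdef
    have hS : S.PosDef := hSplit
    set A : Matrix (Fin m) (Fin m) ℝ := S⁻¹ with hAdef
    have hA : A.PosDef := hS.inv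
    have hAsymm : Aᵀ = A := by
      have := hA.isHermitian
      rwa [Matrix.IsHermitian, Matrix.conjTranspose_eq_transpose_of_trivial] at this
    have hSdet : IsUnit S.det := isUnit_iff_ne_zero.mpr hS.det_pos.ne'
    have hSIdet : IsUnit Sη.det := isUnit_iff_ne_zero.mpr hSη.det_pos.ne'
    have hSA : S * A = 1 := Matrix.mul_nonsing_inv S hSdet
    have hAS : A * S = 1 := Matrix.nonsing_inv_mul S hSdet
    have hSIcan : Sη⁻¹ * Sη = 1 := Matrix.nonsing_inv_mul Sη hSIdet
    have hSIeq : Sη = S + t • (H * Hᵀ) := by rw [hSdef, sub_add_cancel]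
    have hSIsymm : Sηᵀ = Sη := by
      have := hSη.isHermitian
      rwa [Matrix.IsHermitian, Matrix.conjTranspose_eq_transpose_of_trivial] at this
    have hSIinvsymm : (Sη⁻¹)ᵀ = Sη⁻¹ := by rw [Matrix.transpose_nonsing_inv, hSIsymm]
    set M : Matrix (Fin n) (Fin n) ℝ :=
      Hᵀ * A * H + t⁻¹ • (1 : Matrix (Fin n) (Fin n) ℝ) with hMdef
    have hM : M.PosDef := by
      apply Matrix.PosDef.posSemidef_add
      · have h := hA.posSemidef.conjTranspose_mul_mul_same H
        rwa [Matrix.conjTranspose_eq_transpose_of_trivial] at h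
      · exact posDef_smul_one (by positivity)
    have hMsymm : Mᵀ = M := by
      have := hM.isHermitian
      rwa [Matrix.IsHermitian, Matrix.conjTranspose_eq_transpose_of_trivial] at this
    have hMdet : IsUnit M.det := isUnit_iff_ne_zero.mpr hM.det_pos.ne'
    have hMinvsymm : (M⁻¹)ᵀ = M⁻¹ := by rw [Matrix.transpose_nonsing_inv, hMsymm]
    -- key identity (ii)
    have key : (Hᵀ * A) * Sη = (M * (t • (Hᵀ * Sη⁻¹))) * Sη := by
      conv_lhs => rw [hSIeq]
      simp only [hMdef, Matrix.add_mul, Matrix.mul_add, Matrix.smul_mul, Matrix.mul_smul,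
        Matrix.mul_assoc, smul_smul, hSIcan, hAS, Matrix.mul_one, Matrix.one_mul, smul_add,
        inv_mul_cancel₀ ht.ne', mul_inv_cancel₀ ht.ne', one_smul]
      abel
    -- (ii)
    have hii : M⁻¹ * (Hᵀ * A) = t • (Hᵀ * Sη⁻¹) := by
      have h2 := congrArg (fun Z => M⁻¹ * (Z * Sη⁻¹)) key
      rw [Matrix.mul_nonsing_inv_cancel_right _ _ hSIdet,
        Matrix.mul_nonsing_inv_cancel_right _ _ hSIdet] at h2
      rw [h2, ← Matrix.mul_assoc, Matrix.nonsing_inv_mul M hMdet, Matrix.one_mul]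
    -- (iii)
    have hiii : (Hᵀ * Sη⁻¹) * H
        = t⁻¹ • (1 : Matrix (Fin n) (Fin n) ℝ) - (t⁻¹ * t⁻¹) • M⁻¹ := by
      have h1 : Hᵀ * Sη⁻¹ = t⁻¹ • (M⁻¹ * (Hᵀ * A)) := by
        rw [hii, smul_smul, inv_mul_cancel₀ ht.ne', one_smul]
      have h3 : (Hᵀ * A) * H = M - t⁻¹ • 1 := by
        rw [hMdef]; exact (add_sub_cancel_right _ _).symm
      rw [h1, Matrix.smul_mul, Matrix.mul_assoc, h3, Matrix.mul_sub,
        Matrix.nonsing_inv_mul M hMdet, Matrix.mul_smul, Matrix.mul_one, smul_sub,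
        smul_smul]
    -- (i)
    have hi : A - t • ((A * (H * Hᵀ)) * Sη⁻¹) = Sη⁻¹ := by
      have e : (A - t • ((A * (H * Hᵀ)) * Sη⁻¹)) * Sη = Sη⁻¹ * Sη := by
        rw [Matrix.sub_mul, Matrix.smul_mul, Matrix.mul_assoc (A * (H * Hᵀ)) Sη⁻¹ Sη,
          hSIcan, Matrix.mul_one]
        conv_lhs => rw [hSIeq]
        rw [Matrix.mul_add, hAS, Matrix.mul_smul, ← Matrix.mul_assoc]
        exact add_sub_cancel_right _ _
      have h2 := congrArg (fun Z => Z * Sη⁻¹) e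
      rwa [Matrix.mul_nonsing_inv_cancel_right _ _ hSIdet,
        Matrix.mul_nonsing_inv_cancel_right _ _ hSIdet] at h2
    -- determinant identity
    have hdet : Sη.det = S.det * (t ^ n * M.det) := by
      have h1 : (t • M).det = t ^ n * M.det := by
        rw [Matrix.det_smul, Fintype.card_fin]
      have h2 : (1 : Matrix (Fin n) (Fin n) ℝ) + Hᵀ * (t • (A * H)) = t • M := by
        rw [hMdef, smul_add, smul_smul, mul_inv_cancel₀ ht.ne', one_smul,
          Matrix.mul_smul, ← Matrix.mul_assoc]
        abel
      have h3 : S * ((1 : Matrix (Fin m) (Fin m) ℝ) + (t • (A * H)) * Hᵀ) = Sη := by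
        rw [Matrix.mul_add, Matrix.mul_one, Matrix.smul_mul, Matrix.mul_smul, hSIeq]
        congr 1
        rw [Matrix.mul_assoc A H Hᵀ, ← Matrix.mul_assoc S A (H * Hᵀ), hSA, Matrix.one_mul]
      calc Sη.det = (S * (1 + (t • (A * H)) * Hᵀ)).det := by rw [h3]
        _ = S.det * (1 + (t • (A * H)) * Hᵀ).det := by rw [Matrix.det_mul]
        _ = S.det * (1 + Hᵀ * (t • (A * H))).det := by rw [Matrix.det_one_add_mul_comm]
        _ = S.det * (t • M).det := by rw [h2]
        _ = S.det * (t ^ n * M.det) := by rw [h1]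
    -- the linear-term vector
    set b : Fin n → ℝ := (Hᵀ * A).mulVec y + t⁻¹ • x with hbdef
    -- constant identity (Woodbury at the scalar level)
    have e0 : M⁻¹.mulVec ((Hᵀ * A).mulVec y) = t • ((Hᵀ * Sη⁻¹).mulVec y) := by
      rw [Matrix.mulVec_mulVec, hii, Matrix.smul_mulVec]
    have hconst : y ⬝ᵥ A.mulVec y + t⁻¹ * (x ⬝ᵥ x) - b ⬝ᵥ M⁻¹.mulVec b
        = (y - H.mulVec x) ⬝ᵥ Sη⁻¹.mulVec (y - H.mulVec x) := by
      have hassoc : (A * H) * (Hᵀ * Sη⁻¹) = (A * (H * Hᵀ)) * Sη⁻¹ := by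
        simp only [Matrix.mul_assoc]
      have T11 : (Hᵀ * A).mulVec y ⬝ᵥ M⁻¹.mulVec ((Hᵀ * A).mulVec y)
          = y ⬝ᵥ (t • ((A * (H * Hᵀ)) * Sη⁻¹)).mulVec y := by
        rw [e0, mulVec_dotProduct'', Matrix.transpose_mul, Matrix.transpose_transpose, hAsymm,
          Matrix.mulVec_smul, Matrix.mulVec_mulVec, hassoc, Matrix.smul_mulVec]
      have T21 : (t⁻¹ • x) ⬝ᵥ M⁻¹.mulVec ((Hᵀ * A).mulVec y)
          = x ⬝ᵥ (Hᵀ * Sη⁻¹).mulVec y := by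
        rw [e0, smul_dotProduct, dotProduct_smul, smul_eq_mul, smul_eq_mul,
          ← mul_assoc, inv_mul_cancel₀ ht.ne', one_mul]
      have T12 : (Hᵀ * A).mulVec y ⬝ᵥ M⁻¹.mulVec (t⁻¹ • x)
          = x ⬝ᵥ (Hᵀ * Sη⁻¹).mulVec y := by
        rw [dot_symm M⁻¹ hMinvsymm]; exact T21
      have T22 : (t⁻¹ • x) ⬝ᵥ M⁻¹.mulVec (t⁻¹ • x)
          = t⁻¹ * (t⁻¹ * (x ⬝ᵥ M⁻¹.mulVec x)) := by
        rw [smul_dotProduct, Matrix.mulVec_smul, dotProduct_smul]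
        simp only [smul_eq_mul]
      have ebb : b ⬝ᵥ M⁻¹.mulVec b
          = y ⬝ᵥ (t • ((A * (H * Hᵀ)) * Sη⁻¹)).mulVec y
            + 2 * (x ⬝ᵥ (Hᵀ * Sη⁻¹).mulVec y)
            + t⁻¹ * (t⁻¹ * (x ⬝ᵥ M⁻¹.mulVec x)) := by
        rw [hbdef, Matrix.mulVec_add, dotProduct_add, add_dotProduct,
          add_dotProduct, T11, T12, T21, T22]
        ring
      have eyy : y ⬝ᵥ Sη⁻¹.mulVec y
          = y ⬝ᵥ A.mulVec y - y ⬝ᵥ (t • ((A * (H * Hᵀ)) * Sη⁻¹)).mulVec y := by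
        conv_lhs => rw [← hi]
        rw [Matrix.sub_mulVec, dotProduct_sub]
      have eR : (y - H.mulVec x) ⬝ᵥ Sη⁻¹.mulVec (y - H.mulVec x)
          = y ⬝ᵥ Sη⁻¹.mulVec y - 2 * (x ⬝ᵥ (Hᵀ * Sη⁻¹).mulVec y)
            + (t⁻¹ * (x ⬝ᵥ x) - t⁻¹ * (t⁻¹ * (x ⬝ᵥ M⁻¹.mulVec x))) := by
        rw [quad_sub_expand Sη⁻¹ hSIinvsymm y (H.mulVec x)]
        have c1 : H.mulVec x ⬝ᵥ Sη⁻¹.mulVec y = x ⬝ᵥ (Hᵀ * Sη⁻¹).mulVec y := by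
          rw [mulVec_dotProduct'', Matrix.mulVec_mulVec]
        have c2 : H.mulVec x ⬝ᵥ Sη⁻¹.mulVec (H.mulVec x)
            = t⁻¹ * (x ⬝ᵥ x) - t⁻¹ * (t⁻¹ * (x ⬝ᵥ M⁻¹.mulVec x)) := by
          rw [mulVec_dotProduct'', Matrix.mulVec_mulVec, Matrix.mulVec_mulVec, hiii,
            Matrix.sub_mulVec, dotProduct_sub, Matrix.smul_mulVec,
            Matrix.one_mulVec, dotProduct_smul, Matrix.smul_mulVec,
            dotProduct_smul, smul_eq_mul, smul_eq_mul]
          ring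
        rw [c1, c2]
      rw [eR, eyy, ebb]
      ring
    -- pointwise exponent identity
    have hquad : ∀ z : Fin n → ℝ,
        (y - H.mulVec z) ⬝ᵥ A.mulVec (y - H.mulVec z)
          + (z - x) ⬝ᵥ ((t • (1 : Matrix (Fin n) (Fin n) ℝ))⁻¹).mulVec (z - x)
        = (z - M⁻¹.mulVec b) ⬝ᵥ M.mulVec (z - M⁻¹.mulVec b)
          + (y - H.mulVec x) ⬝ᵥ Sη⁻¹.mulVec (y - H.mulVec x) := by
      intro z
      have e1 : (y - H.mulVec z) ⬝ᵥ A.mulVec (y - H.mulVec z)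
          = y ⬝ᵥ A.mulVec y - 2 * (z ⬝ᵥ (Hᵀ * A).mulVec y)
            + z ⬝ᵥ ((Hᵀ * A) * H).mulVec z := by
        rw [quad_sub_expand A hAsymm y (H.mulVec z)]
        rw [mulVec_dotProduct'' H z (A.mulVec y), Matrix.mulVec_mulVec]
        rw [Matrix.mulVec_mulVec, mulVec_dotProduct'' H z ((A * H).mulVec z),
          Matrix.mulVec_mulVec, ← Matrix.mul_assoc]
      have e2 : (z - x) ⬝ᵥ ((t • (1 : Matrix (Fin n) (Fin n) ℝ))⁻¹).mulVec (z - x)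
          = t⁻¹ * (z ⬝ᵥ z) - 2 * (t⁻¹ * (x ⬝ᵥ z)) + t⁻¹ * (x ⬝ᵥ x) := by
        rw [inv_smul_one' ht.ne', Matrix.smul_mulVec, Matrix.one_mulVec,
          dotProduct_smul, smul_eq_mul]
        have e : (z - x) ⬝ᵥ (z - x) = z ⬝ᵥ z - 2 * (x ⬝ᵥ z) + x ⬝ᵥ x := by
          rw [sub_dotProduct, dotProduct_sub, dotProduct_sub,
            dotProduct_comm x z]
          ring
        rw [e]; ring
      have e3 : z ⬝ᵥ M.mulVec z = z ⬝ᵥ ((Hᵀ * A) * H).mulVec z + t⁻¹ * (z ⬝ᵥ z) := by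
        conv_lhs => rw [hMdef]
        rw [Matrix.add_mulVec, dotProduct_add, Matrix.smul_mulVec,
          Matrix.one_mulVec, dotProduct_smul, smul_eq_mul]
      have e4 : b ⬝ᵥ z = z ⬝ᵥ (Hᵀ * A).mulVec y + t⁻¹ * (x ⬝ᵥ z) := by
        rw [hbdef, add_dotProduct, dotProduct_comm ((Hᵀ * A).mulVec y) z,
          smul_dotProduct, smul_eq_mul]
      have cs := complete_square M hMsymm hMdet b z
      linarith [e1, e2, e3, e4, cs, hconst]
    -- pointwise product identity
    have hpoint : ∀ z : Fin n → ℝ,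
        gaussDensity m (H.mulVec z) S y * gaussDensity n x (t • 1) z
          = (((2 * Real.pi) ^ m * S.det) ^ (-(1:ℝ)/2)
              * ((2 * Real.pi) ^ n * (t • (1 : Matrix (Fin n) (Fin n) ℝ)).det) ^ (-(1:ℝ)/2)
              * Real.exp (-(1/2) * ((y - H.mulVec x) ⬝ᵥ Sη⁻¹.mulVec (y - H.mulVec x))))
            * Real.exp (-(1/2) * ((z - M⁻¹.mulVec b) ⬝ᵥ M.mulVec (z - M⁻¹.mulVec b))) := by
      intro z
      unfold gaussDensity
      have em : Real.exp (-(1/2) * ((y - H.mulVec z) ⬝ᵥ A.mulVec (y - H.mulVec z)))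
            * Real.exp (-(1/2) * ((z - x) ⬝ᵥ ((t • (1 : Matrix (Fin n) (Fin n) ℝ))⁻¹).mulVec (z - x)))
          = Real.exp (-(1/2) * ((z - M⁻¹.mulVec b) ⬝ᵥ M.mulVec (z - M⁻¹.mulVec b)))
            * Real.exp (-(1/2) * ((y - H.mulVec x) ⬝ᵥ Sη⁻¹.mulVec (y - H.mulVec x))) := by
        rw [← Real.exp_add, ← Real.exp_add]
        congr 1
        linarith [hquad z]
      calc ((2 * Real.pi) ^ m * S.det) ^ (-(1:ℝ)/2)
            * Real.exp (-(1/2) * ((y - H.mulVec z) ⬝ᵥ A.mulVec (y - H.mulVec z)))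
            * (((2 * Real.pi) ^ n * (t • (1 : Matrix (Fin n) (Fin n) ℝ)).det) ^ (-(1:ℝ)/2)
              * Real.exp (-(1/2) * ((z - x) ⬝ᵥ ((t • (1 : Matrix (Fin n) (Fin n) ℝ))⁻¹).mulVec (z - x))))
          = ((2 * Real.pi) ^ m * S.det) ^ (-(1:ℝ)/2)
              * ((2 * Real.pi) ^ n * (t • (1 : Matrix (Fin n) (Fin n) ℝ)).det) ^ (-(1:ℝ)/2)
              * (Real.exp (-(1/2) * ((y - H.mulVec z) ⬝ᵥ A.mulVec (y - H.mulVec z)))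
                * Real.exp (-(1/2) * ((z - x) ⬝ᵥ ((t • (1 : Matrix (Fin n) (Fin n) ℝ))⁻¹).mulVec (z - x)))) := by
            ring
        _ = _ := by rw [em]; ring
    -- compute the integral
    rw [show (fun z : Fin n → ℝ =>
        gaussDensity m (H.mulVec z) S y * gaussDensity n x (t • 1) z)
      = fun z : Fin n → ℝ =>
          (((2 * Real.pi) ^ m * S.det) ^ (-(1:ℝ)/2)
            * ((2 * Real.pi) ^ n * (t • (1 : Matrix (Fin n) (Fin n) ℝ)).det) ^ (-(1:ℝ)/2)
            * Real.exp (-(1/2) * ((y - H.mulVec x) ⬝ᵥ Sη⁻¹.mulVec (y - H.mulVec x))))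
          * Real.exp (-(1/2) * ((z - M⁻¹.mulVec b) ⬝ᵥ M.mulVec (z - M⁻¹.mulVec b)))
      from funext hpoint]
    rw [MeasureTheory.integral_const_mul, integral_gauss_quad M hM (M⁻¹.mulVec b)]
    -- final constant bookkeeping
    unfold gaussDensity
    have hpi : (0:ℝ) < 2 * Real.pi := by positivity
    have hpos1 : (0:ℝ) < (2 * Real.pi) ^ m * S.det := by
      have := hS.det_pos; positivity
    have hpos2 : (0:ℝ) < (2 * Real.pi) ^ n * (t • (1 : Matrix (Fin n) (Fin n) ℝ)).det := by
      rw [det_smul_one]; positivity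
    have hpos3 : (0:ℝ) < (2 * Real.pi) ^ m * Sη.det := by
      have := hSη.det_pos; positivity
    rw [rpow_neg_half_eq hpos1, rpow_neg_half_eq hpos2, rpow_neg_half_eq hpos3]
    have hcst : (Real.sqrt ((2 * Real.pi) ^ m * S.det))⁻¹
          * (Real.sqrt ((2 * Real.pi) ^ n * (t • (1 : Matrix (Fin n) (Fin n) ℝ)).det))⁻¹
          * (Real.sqrt ((2 * Real.pi) ^ n) * (Real.sqrt M.det)⁻¹)
        = (Real.sqrt ((2 * Real.pi) ^ m * Sη.det))⁻¹ := by
      rw [det_smul_one, hdet]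
      rw [Real.sqrt_mul (by positivity : (0:ℝ) ≤ (2 * Real.pi) ^ m) S.det,
        Real.sqrt_mul (by positivity : (0:ℝ) ≤ (2 * Real.pi) ^ n) (t ^ n),
        Real.sqrt_mul (by positivity : (0:ℝ) ≤ (2 * Real.pi) ^ m) (S.det * (t ^ n * M.det)),
        Real.sqrt_mul hS.det_pos.le, Real.sqrt_mul (by positivity : (0:ℝ) ≤ t ^ n)]
      have s1 : (0:ℝ) < Real.sqrt ((2 * Real.pi) ^ m) := Real.sqrt_pos.mpr (by positivity)
      have s2 : (0:ℝ) < Real.sqrt ((2 * Real.pi) ^ n) := Real.sqrt_pos.mpr (by positivity)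
      have s3 : (0:ℝ) < Real.sqrt S.det := Real.sqrt_pos.mpr hS.det_pos
      have s4 : (0:ℝ) < Real.sqrt (t ^ n) := Real.sqrt_pos.mpr (by positivity)
      have s5 : (0:ℝ) < Real.sqrt M.det := Real.sqrt_pos.mpr hM.det_pos
      field_simp
    calc (Real.sqrt ((2 * Real.pi) ^ m * S.det))⁻¹
          * (Real.sqrt ((2 * Real.pi) ^ n * (t • (1 : Matrix (Fin n) (Fin n) ℝ)).det))⁻¹
          * Real.exp (-(1/2) * ((y - H.mulVec x) ⬝ᵥ Sη⁻¹.mulVec (y - H.mulVec x)))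
          * (Real.sqrt ((2 * Real.pi) ^ n) * (Real.sqrt M.det)⁻¹)
        = ((Real.sqrt ((2 * Real.pi) ^ m * S.det))⁻¹
            * (Real.sqrt ((2 * Real.pi) ^ n * (t • (1 : Matrix (Fin n) (Fin n) ℝ)).det))⁻¹
            * (Real.sqrt ((2 * Real.pi) ^ n) * (Real.sqrt M.det)⁻¹))
            * Real.exp (-(1/2) * ((y - H.mulVec x) ⬝ᵥ Sη⁻¹.mulVec (y - H.mulVec x))) := by
          ring
      _ = (Real.sqrt ((2 * Real.pi) ^ m * Sη.det))⁻¹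
            * Real.exp (-(1/2) * ((y - H.mulVec x) ⬝ᵥ Sη⁻¹.mulVec (y - H.mulVec x))) := by
          rw [hcst]
  exact ⟨main, fun p _ x y => by rw [main x y]⟩
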